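/- arXiv:2109.15131 — 3 statements merged into one kernel-verified Lean document; each statement's English description precedes it below -/
import Mathlib

section
/- Let F be a formal group law over a commutative ring R and let i_{z,w}F(z,w)^n ∈ R⟦w⟧((z)) denote the expansion of F(z,w)^n in negative powers of z (for n ∈ ℤ). Then i_{z,w}F(z,w)^{-n} · F(z,w)^n = 1 for all n ≥ 0. -/
/-!
A formal group law over a commutative ring `R` is a power series
`F(z,w) = Σ_{i,j≥0} F_{ij} z^i w^j ∈ R⟦z,w⟧` with `F(z,w) = F(w,z)`, `F(z,0) = z` and
`F(F(z,w),v) = F(z,F(w,v))`.  We formulate everything coefficientwise: the axioms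
and the substitutions `F(z, ι(z))` are expressed through their (finite) coefficient sums.
-/

open Finset

/-- The coefficient of `z^i w^j` in a two-variable power series. -/
noncomputable def fgCoeff {R : Type*} [CommRing R] (F : MvPowerSeries (Fin 2) R)
    (i j : ℕ) : R :=
  MvPowerSeries.coeff (Finsupp.single 0 i + Finsupp.single 1 j) F

/-- `F` is a (commutative, one-dimensional) formal group law:
commutativity `F(z,w)=F(w,z)`, unitality `F(z,0)=z`, and associativity
`F(F(z,w),v) = F(z,F(w,v))`, stated coefficientwise (the coefficient of
`z^a w^b v^c` of both sides of associativity is a finite sum, since `F` has zero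
constant term, so that `F^i` has order at least `i`). -/
def IsFormalGroupLaw {R : Type*} [CommRing R] (F : MvPowerSeries (Fin 2) R) : Prop :=
  (∀ i j : ℕ, fgCoeff F i j = fgCoeff F j i) ∧
  (∀ i : ℕ, fgCoeff F i 0 = if i = 1 then 1 else 0) ∧
  (∀ a b c : ℕ,
    ∑ i ∈ range (a + b + 1), fgCoeff F i c *
      MvPowerSeries.coeff (Finsupp.single 0 a + Finsupp.single 1 b) (F ^ i)
    = ∑ j ∈ range (b + c + 1), fgCoeff F a j *
      MvPowerSeries.coeff (Finsupp.single 0 b + Finsupp.single 1 c) (F ^ j))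

/-- `ι` is a formal inverse for `F`: it has zero constant term and satisfies
`F(z, ι(z)) = 0`, stated coefficientwise: the coefficient of `z^m` in
`Σ_{i,j} F_{ij} z^i ι(z)^j` vanishes for every `m` (the sum is finite since
`ι` has zero constant term, so `ι^j` has order at least `j`). -/
def IsFormalInverse {R : Type*} [CommRing R] (F : MvPowerSeries (Fin 2) R)
    (ι : PowerSeries R) : Prop :=
  PowerSeries.constantCoeff ι = 0 ∧
  ∀ m : ℕ, ∑ i ∈ range (m + 1), ∑ j ∈ range (m + 1),
    fgCoeff F i j * PowerSeries.coeff (m - i) (ι ^ j) = 0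

/-- The `w`-degree-`(j-k)` slice (as a power series in `z`) of `(1 + zG(z,w))^k`. -/
noncomputable def expSlice {R : Type*} [CommRing R] (G : MvPowerSeries (Fin 2) R)
    (j k : ℕ) : PowerSeries R :=
  PowerSeries.mk fun m => MvPowerSeries.coeff
    (Finsupp.single 0 m + Finsupp.single 1 (j - k))
    ((1 + MvPowerSeries.X 0 * G) ^ k)

/-- The expansion `i_{z,w} F(z,w)^n = Σ_{k≥0} C(n,k) z^{n-k} w^k (1+zG(z,w))^k` of
`F(z,w)^n = z^n (1 + w/z + wG(z,w))^n` (for `n ∈ ℤ`), as an element of `R((z))⟦w⟧`: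
in `w`-degree `j` only the summands with `k ≤ j` contribute, each contributing the
Laurent series `C(n,k) z^{n-k}` times the slice of `(1+zG)^k`. -/
noncomputable def expandZW {R : Type*} [CommRing R] (G : MvPowerSeries (Fin 2) R)
    (n : ℤ) : PowerSeries (LaurentSeries R) :=
  PowerSeries.mk fun j => ∑ k ∈ range (j + 1),
    Ring.choose n k •
      (HahnSeries.single (n - (k : ℤ)) (1 : R) *
        HahnSeries.ofPowerSeries ℤ R (expSlice G j k))

/-- A two-variable power series viewed as an element of `R((z))⟦w⟧` (power series in
the outer variable `w` whose coefficients are Laurent series in `z`). -/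
noncomputable def embedZW' {R : Type*} [CommRing R] (A : MvPowerSeries (Fin 2) R) :
    PowerSeries (LaurentSeries R) :=
  PowerSeries.mk fun j => HahnSeries.ofPowerSeries ℤ R (PowerSeries.mk fun m => fgCoeff A m j)

namespace FGLAux
variable {R : Type*} [CommRing R]

lemma fin2_decomp (f : Fin 2 →₀ ℕ) : f = Finsupp.single 0 (f 0) + Finsupp.single 1 (f 1) := by
  ext x; fin_cases x <;> simp

lemma d_eq_d_iff {m j m' j' : ℕ} :
    (Finsupp.single (0:Fin 2) m + Finsupp.single 1 j : Fin 2 →₀ ℕ)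
      = Finsupp.single 0 m' + Finsupp.single 1 j' ↔ m = m' ∧ j = j' := by
  constructor
  · intro h
    exact ⟨by simpa using DFunLike.congr_fun h 0, by simpa using DFunLike.congr_fun h 1⟩
  · rintro ⟨rfl, rfl⟩; rfl

lemma d_eq_zero_iff {m j : ℕ} :
    (Finsupp.single (0:Fin 2) m + Finsupp.single 1 j : Fin 2 →₀ ℕ) = 0 ↔ m = 0 ∧ j = 0 := by
  have h0 : (0 : Fin 2 →₀ ℕ) = Finsupp.single 0 0 + Finsupp.single 1 0 := by simp
  rw [h0]; exact d_eq_d_iff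

/-- The embedding of `R⟦z,w⟧` into `R((z))⟦w⟧`. -/
noncomputable def emb : MvPowerSeries (Fin 2) R →+* PowerSeries (LaurentSeries R) where
  toFun A := PowerSeries.mk fun j => HahnSeries.ofPowerSeries ℤ R
    (PowerSeries.mk fun m =>
      MvPowerSeries.coeff (Finsupp.single 0 m + Finsupp.single 1 j) A)
  map_zero' := by
    apply PowerSeries.ext; intro j
    rw [PowerSeries.coeff_mk]
    have h : (PowerSeries.mk fun m =>
        MvPowerSeries.coeff (Finsupp.single 0 m + Finsupp.single 1 j)
          (0 : MvPowerSeries (Fin 2) R)) = 0 := by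
      apply PowerSeries.ext; intro m; simp
    rw [h, map_zero, map_zero]
  map_add' A B := by
    apply PowerSeries.ext; intro j
    rw [PowerSeries.coeff_mk, map_add, PowerSeries.coeff_mk, PowerSeries.coeff_mk, ← map_add]
    congr 1

  map_one' := by
    apply PowerSeries.ext; intro j
    rw [PowerSeries.coeff_mk, PowerSeries.coeff_one]
    by_cases hj : j = 0
    · subst hj
      rw [if_pos rfl]
      have h : (PowerSeries.mk fun m =>
          MvPowerSeries.coeff (Finsupp.single 0 m + Finsupp.single 1 0)
            (1 : MvPowerSeries (Fin 2) R)) = 1 := by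
        apply PowerSeries.ext; intro m
        rw [PowerSeries.coeff_mk, MvPowerSeries.coeff_one, PowerSeries.coeff_one]
        simp [d_eq_zero_iff]
      rw [h, map_one]
    · rw [if_neg hj]
      have h : (PowerSeries.mk fun m =>
          MvPowerSeries.coeff (Finsupp.single 0 m + Finsupp.single 1 j)
            (1 : MvPowerSeries (Fin 2) R)) = 0 := by
        apply PowerSeries.ext; intro m
        rw [PowerSeries.coeff_mk, MvPowerSeries.coeff_one]
        simp [d_eq_zero_iff, hj]
      rw [h, map_zero]
  map_mul' A B := by
    apply PowerSeries.ext; intro j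
    rw [PowerSeries.coeff_mul, PowerSeries.coeff_mk]
    simp only [PowerSeries.coeff_mk, ← map_mul, ← map_sum]
    congr 1
    apply PowerSeries.ext; intro m
    rw [PowerSeries.coeff_mk, map_sum, MvPowerSeries.coeff_mul]
    simp only [PowerSeries.coeff_mul, PowerSeries.coeff_mk]
    rw [← Finset.sum_product']
    refine Finset.sum_nbij' (fun p => ((p.1 1, p.2 1), (p.1 0, p.2 0)))
      (fun q => (Finsupp.single 0 q.2.1 + Finsupp.single 1 q.1.1,
        Finsupp.single 0 q.2.2 + Finsupp.single 1 q.1.2)) ?_ ?_ ?_ ?_ ?_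
    · intro p hp
      rw [Finset.HasAntidiagonal.mem_antidiagonal] at hp
      rw [Finset.mem_product, Finset.HasAntidiagonal.mem_antidiagonal, Finset.HasAntidiagonal.mem_antidiagonal]
      constructor
      · have := DFunLike.congr_fun hp 1; simpa using this
      · have := DFunLike.congr_fun hp 0; simpa using this
    · intro q hq
      rw [Finset.mem_product, Finset.HasAntidiagonal.mem_antidiagonal, Finset.HasAntidiagonal.mem_antidiagonal] at hq
      rw [Finset.HasAntidiagonal.mem_antidiagonal]
      ext x
      fin_cases x <;> simp [hq.1, hq.2]
    · intro p _
      simp only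
      rw [← fin2_decomp, ← fin2_decomp]
    · intro q _
      simp
    · intro p _
      simp only
      rw [← fin2_decomp, ← fin2_decomp]


lemma coeff_emb (A : MvPowerSeries (Fin 2) R) (j : ℕ) :
    PowerSeries.coeff j (emb A) = HahnSeries.ofPowerSeries ℤ R
      (PowerSeries.mk fun m =>
        MvPowerSeries.coeff (Finsupp.single 0 m + Finsupp.single 1 j) A) := by
  simp only [emb, RingHom.coe_mk, MonoidHom.coe_mk, OneHom.coe_mk, PowerSeries.coeff_mk]

lemma emb_X0 : emb (MvPowerSeries.X 0 : MvPowerSeries (Fin 2) R)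
    = PowerSeries.C (HahnSeries.single (1:ℤ) (1:R)) := by
  apply PowerSeries.ext; intro j
  rw [coeff_emb, PowerSeries.coeff_C]
  have hx : ∀ e, MvPowerSeries.coeff e (MvPowerSeries.X 0 : MvPowerSeries (Fin 2) R)
      = if e = Finsupp.single 0 1 then 1 else 0 := fun e => by
    rw [MvPowerSeries.X, MvPowerSeries.coeff_monomial]
  by_cases hj : j = 0
  · subst hj
    rw [if_pos rfl]
    have h : (PowerSeries.mk fun m =>
        MvPowerSeries.coeff (Finsupp.single 0 m + Finsupp.single 1 0)
          (MvPowerSeries.X 0 : MvPowerSeries (Fin 2) R)) = PowerSeries.X := by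
      apply PowerSeries.ext; intro m
      rw [PowerSeries.coeff_mk, hx, PowerSeries.coeff_X]
      have hcond : ((Finsupp.single (0:Fin 2) m + Finsupp.single 1 0 : Fin 2 →₀ ℕ)
          = Finsupp.single 0 1) ↔ (m = 1) := by
        have h1 : (Finsupp.single (0:Fin 2) 1 : Fin 2 →₀ ℕ)
            = Finsupp.single 0 1 + Finsupp.single 1 0 := by simp
        rw [h1, d_eq_d_iff]; simp
      rw [if_congr hcond rfl rfl]
    rw [h, HahnSeries.ofPowerSeries_X]
  · rw [if_neg hj]
    have h : (PowerSeries.mk fun m =>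
        MvPowerSeries.coeff (Finsupp.single 0 m + Finsupp.single 1 j)
          (MvPowerSeries.X 0 : MvPowerSeries (Fin 2) R)) = 0 := by
      apply PowerSeries.ext; intro m
      rw [PowerSeries.coeff_mk, hx]
      have hcond : ¬ ((Finsupp.single (0:Fin 2) m + Finsupp.single 1 j : Fin 2 →₀ ℕ)
          = Finsupp.single 0 1) := by
        have h1 : (Finsupp.single (0:Fin 2) 1 : Fin 2 →₀ ℕ)
            = Finsupp.single 0 1 + Finsupp.single 1 0 := by simp
        rw [h1, d_eq_d_iff]; simp [hj]
      rw [if_neg hcond]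
      simp
    rw [h, map_zero]

lemma emb_X1 : emb (MvPowerSeries.X 1 : MvPowerSeries (Fin 2) R) = PowerSeries.X := by
  apply PowerSeries.ext; intro j
  rw [coeff_emb, PowerSeries.coeff_X]
  have hx : ∀ e, MvPowerSeries.coeff e (MvPowerSeries.X 1 : MvPowerSeries (Fin 2) R)
      = if e = Finsupp.single 1 1 then 1 else 0 := fun e => by
    rw [MvPowerSeries.X, MvPowerSeries.coeff_monomial]
  have key : ∀ m, ((Finsupp.single (0:Fin 2) m + Finsupp.single 1 j : Fin 2 →₀ ℕ)
      = Finsupp.single 1 1) ↔ (m = 0 ∧ j = 1) := fun m => by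
    have h1 : (Finsupp.single (1:Fin 2) 1 : Fin 2 →₀ ℕ)
        = Finsupp.single 0 0 + Finsupp.single 1 1 := by simp
    rw [h1]; exact d_eq_d_iff
  by_cases hj : j = 1
  · subst hj
    rw [if_pos rfl]
    have h : (PowerSeries.mk fun m =>
        MvPowerSeries.coeff (Finsupp.single 0 m + Finsupp.single 1 1)
          (MvPowerSeries.X 1 : MvPowerSeries (Fin 2) R)) = 1 := by
      apply PowerSeries.ext; intro m
      rw [PowerSeries.coeff_mk, hx, PowerSeries.coeff_one,
        if_congr ((key m).trans (and_iff_left rfl)) rfl rfl]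
    rw [h, map_one]
  · rw [if_neg hj]
    have h : (PowerSeries.mk fun m =>
        MvPowerSeries.coeff (Finsupp.single 0 m + Finsupp.single 1 j)
          (MvPowerSeries.X 1 : MvPowerSeries (Fin 2) R)) = 0 := by
      apply PowerSeries.ext; intro m
      rw [PowerSeries.coeff_mk, hx, if_neg (fun h => hj ((key m).mp h).2)]
      simp
    rw [h, map_zero]


section Main
variable {R : Type*} [CommRing R] (G : MvPowerSeries (Fin 2) R)

/-- `y = w(1 + zG)` as an element of `R((z))⟦w⟧`. -/
noncomputable def yy : PowerSeries (LaurentSeries R) :=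
  PowerSeries.X * emb (1 + MvPowerSeries.X 0 * G)

lemma coeff_yy_pow {j k : ℕ} (hk : k ≤ j) :
    PowerSeries.coeff j (yy G ^ k)
      = HahnSeries.ofPowerSeries ℤ R (expSlice G j k) := by
  rw [yy, mul_pow, PowerSeries.coeff_X_pow_mul', if_pos hk, ← map_pow, coeff_emb]
  rfl

lemma coeff_yy_pow_eq_zero {j k : ℕ} (hk : j < k) :
    PowerSeries.coeff j (yy G ^ k) = 0 := by
  rw [yy, mul_pow, PowerSeries.coeff_X_pow_mul', if_neg (not_le.mpr hk)]

/-- `z^a Σ_k C(a,k) (y/z)^k` as an element of `R((z))⟦w⟧`. -/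
noncomputable def PP (a : ℤ) : PowerSeries (LaurentSeries R) :=
  PowerSeries.mk fun j => ∑ k ∈ range (j + 1),
    ((Ring.choose a k : ℤ) : LaurentSeries R) *
      (HahnSeries.single (a - (k : ℤ)) (1 : R) *
        PowerSeries.coeff j (yy G ^ k))

lemma expandZW_eq_PP (a : ℤ) : expandZW G a = PP G a := by
  apply PowerSeries.ext; intro j
  rw [expandZW, PP, PowerSeries.coeff_mk, PowerSeries.coeff_mk]
  refine Finset.sum_congr rfl fun k hk => ?_
  rw [coeff_yy_pow G (Nat.lt_succ_iff.mp (mem_range.mp hk)), zsmul_eq_mul]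

lemma coeff_PP (a : ℤ) {j N : ℕ} (hN : j ≤ N) :
    PowerSeries.coeff j (PP G a) = ∑ k ∈ range (N + 1),
      ((Ring.choose a k : ℤ) : LaurentSeries R) *
        (HahnSeries.single (a - (k : ℤ)) (1 : R) *
          PowerSeries.coeff j (yy G ^ k)) := by
  rw [PP, PowerSeries.coeff_mk]
  apply Finset.sum_subset (Finset.range_subset_range.mpr (by omega))
  intro k hk hk'
  rw [mem_range] at hk hk'
  rw [coeff_yy_pow_eq_zero G (by omega), mul_zero, mul_zero]

lemma sq_to_triangle {M : Type*} [AddCommMonoid M] (t : ℕ) (f : ℕ → ℕ → M)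
    (hf : ∀ k l, t < k + l → f k l = 0) :
    ∑ k ∈ range (t + 1), ∑ l ∈ range (t + 1), f k l
      = ∑ s ∈ range (t + 1), ∑ p ∈ antidiagonal s, f p.1 p.2 := by
  rw [← Finset.sum_product']
  have step1 : ∑ p ∈ range (t + 1) ×ˢ range (t + 1), f p.1 p.2
      = ∑ p ∈ (range (t + 1) ×ˢ range (t + 1)).filter (fun p => p.1 + p.2 ≤ t),
          f p.1 p.2 := by
    refine (Finset.sum_subset (Finset.filter_subset _ _) ?_).symm
    intro p hp hnp
    rw [Finset.mem_filter, not_and] at hnp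
    exact hf p.1 p.2 (by have := hnp hp; omega)
  rw [step1, Finset.sum_sigma']
  refine (Finset.sum_nbij' (fun x => x.2) (fun p => ⟨p.1 + p.2, p⟩) ?_ ?_ ?_ ?_ ?_).symm
  · rintro ⟨s, p⟩ hx
    simp only [Finset.mem_sigma, mem_range, Finset.HasAntidiagonal.mem_antidiagonal] at hx
    simp only [Finset.mem_filter, Finset.mem_product, mem_range]
    omega
  · intro p hp
    rw [Finset.mem_filter, Finset.mem_product, mem_range, mem_range] at hp
    rw [Finset.mem_sigma, mem_range, Finset.HasAntidiagonal.mem_antidiagonal]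
    dsimp only
    exact ⟨by omega, rfl⟩
  · rintro ⟨s, p⟩ hx
    rw [Finset.mem_sigma, mem_range, Finset.HasAntidiagonal.mem_antidiagonal] at hx
    simp only
    congr 1
    exact hx.2
  · intro p _; rfl
  · intro x _; rfl

lemma PP_mul (a b : ℤ) : PP G a * PP G b = PP G (a + b) := by
  apply PowerSeries.ext; intro t
  rw [PowerSeries.coeff_mul]
  have h1 : ∀ p ∈ antidiagonal t,
      PowerSeries.coeff p.1 (PP G a) *
        PowerSeries.coeff p.2 (PP G b)
      = ∑ k ∈ range (t + 1), ∑ l ∈ range (t + 1),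
          (((Ring.choose a k : ℤ) : LaurentSeries R) * ((Ring.choose b l : ℤ)) *
            (HahnSeries.single (a + b - ((k : ℤ) + l)) (1 : R))) *
          (PowerSeries.coeff p.1 (yy G ^ k) *
            PowerSeries.coeff p.2 (yy G ^ l)) := by
    intro p hp
    rw [Finset.HasAntidiagonal.mem_antidiagonal] at hp
    rw [coeff_PP G a (show p.1 ≤ t by omega), coeff_PP G b (show p.2 ≤ t by omega),
      Finset.sum_mul_sum]
    refine Finset.sum_congr rfl fun k _ => Finset.sum_congr rfl fun l _ => ?_
    have hs : HahnSeries.single (a - (k : ℤ)) (1 : R) *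
        HahnSeries.single (b - (l : ℤ)) (1 : R)
        = HahnSeries.single (a + b - ((k : ℤ) + l)) (1 : R) := by
      rw [HahnSeries.single_mul_single, mul_one]
      congr 1
      ring
    calc ((Ring.choose a k : ℤ) : LaurentSeries R) *
          (HahnSeries.single (a - (k : ℤ)) (1 : R) *
            PowerSeries.coeff p.1 (yy G ^ k)) *
          (((Ring.choose b l : ℤ) : LaurentSeries R) *
            (HahnSeries.single (b - (l : ℤ)) (1 : R) *
              PowerSeries.coeff p.2 (yy G ^ l)))
        = (((Ring.choose a k : ℤ) : LaurentSeries R) * ((Ring.choose b l : ℤ)) *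
            (HahnSeries.single (a - (k : ℤ)) (1 : R) *
              HahnSeries.single (b - (l : ℤ)) (1 : R))) *
          (PowerSeries.coeff p.1 (yy G ^ k) *
            PowerSeries.coeff p.2 (yy G ^ l)) := by ring
      _ = _ := by rw [hs]
  rw [Finset.sum_congr rfl h1, Finset.sum_comm]
  have h2 : ∀ k ∈ range (t + 1),
      (∑ p ∈ antidiagonal t, ∑ l ∈ range (t + 1),
        (((Ring.choose a k : ℤ) : LaurentSeries R) * ((Ring.choose b l : ℤ)) *
          (HahnSeries.single (a + b - ((k : ℤ) + l)) (1 : R))) *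
        (PowerSeries.coeff p.1 (yy G ^ k) *
          PowerSeries.coeff p.2 (yy G ^ l)))
      = ∑ l ∈ range (t + 1),
          (((Ring.choose a k : ℤ) : LaurentSeries R) * ((Ring.choose b l : ℤ)) *
            (HahnSeries.single (a + b - ((k : ℤ) + l)) (1 : R))) *
          PowerSeries.coeff t (yy G ^ (k + l)) := by
    intro k _
    rw [Finset.sum_comm]
    refine Finset.sum_congr rfl fun l _ => ?_
    rw [← Finset.mul_sum, ← PowerSeries.coeff_mul, ← pow_add]
  rw [Finset.sum_congr rfl h2]
  rw [sq_to_triangle t _ (fun k l hkl => by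
    rw [coeff_yy_pow_eq_zero G hkl, mul_zero])]
  rw [PP, PowerSeries.coeff_mk]
  refine Finset.sum_congr rfl fun s hs => ?_
  have h3 : ∀ p ∈ antidiagonal s,
      (((Ring.choose a p.1 : ℤ) : LaurentSeries R) * ((Ring.choose b p.2 : ℤ)) *
        (HahnSeries.single (a + b - ((p.1 : ℤ) + p.2)) (1 : R))) *
      PowerSeries.coeff t (yy G ^ (p.1 + p.2))
      = (((Ring.choose a p.1 * Ring.choose b p.2 : ℤ) : LaurentSeries R)) *
        (HahnSeries.single (a + b - (s : ℤ)) (1 : R) *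
          PowerSeries.coeff t (yy G ^ s)) := by
    intro p hp
    rw [Finset.HasAntidiagonal.mem_antidiagonal] at hp
    rw [← hp]
    push_cast
    ring
  rw [Finset.sum_congr rfl h3, ← Finset.sum_mul]
  congr 1
  rw [← Int.cast_sum]
  congr 1
  exact (Ring.add_choose_eq s (Commute.all a b)).symm

lemma PP_zero : PP G (0 : ℤ) = 1 := by
  apply PowerSeries.ext; intro j
  rw [PP, PowerSeries.coeff_mk]
  rw [Finset.sum_eq_single 0]
  · rw [Ring.choose_zero_right, pow_zero, Int.cast_one, one_mul,
      show (0:ℤ) - ((0:ℕ):ℤ) = 0 by simp, HahnSeries.single_zero_one, one_mul]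
  · intro k _ hk0
    rw [show (0:ℤ) = ((0:ℕ):ℤ) from rfl, Ring.choose_natCast,
      Nat.choose_eq_zero_of_lt (Nat.pos_of_ne_zero hk0)]
    push_cast
    rw [zero_mul]
  · intro h
    exact absurd (mem_range.mpr (by omega)) h

lemma PP_one : PP G (1 : ℤ)
    = PowerSeries.C (HahnSeries.single (1:ℤ) (1:R)) + yy G := by
  apply PowerSeries.ext; intro j
  rw [PP, PowerSeries.coeff_mk, map_add, PowerSeries.coeff_C]
  cases j with
  | zero =>
    rw [Finset.sum_range_one, Ring.choose_zero_right, pow_zero, if_pos rfl]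
    have h0 : PowerSeries.coeff 0 (yy G)
        = 0 := by
      have := coeff_yy_pow_eq_zero G (j := 0) (k := 1) (by omega)
      rwa [pow_one] at this
    rw [Int.cast_one, one_mul, h0, add_zero,
      show (1:ℤ) - ((0:ℕ):ℤ) = 1 by simp]
    simp
  | succ j =>
    rw [if_neg (by omega), zero_add]
    rw [Finset.sum_eq_single 1]
    · rw [show (1:ℤ) = ((1:ℕ):ℤ) from rfl, Ring.choose_natCast, Nat.choose_self,
        pow_one, Nat.cast_one, Int.cast_one, one_mul,
        show (1:ℤ) - 1 = 0 by ring, HahnSeries.single_zero_one, one_mul]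
    · intro k hk hk1
      rcases Nat.lt_or_ge k 2 with hk2 | hk2
      · interval_cases k
        · rw [pow_zero, PowerSeries.coeff_one, if_neg (by omega), mul_zero, mul_zero]
        · exact absurd rfl hk1
      · rw [show (1:ℤ) = ((1:ℕ):ℤ) from rfl, Ring.choose_natCast,
          Nat.choose_eq_zero_of_lt (by omega)]
        push_cast
        rw [zero_mul]
    · intro h
      exact absurd (mem_range.mpr (by omega)) h

lemma emb_F {F : MvPowerSeries (Fin 2) R}
    (hG : F = MvPowerSeries.X 0 + MvPowerSeries.X 1 +
      MvPowerSeries.X 0 * MvPowerSeries.X 1 * G) :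
    emb F = PowerSeries.C (HahnSeries.single (1:ℤ) (1:R)) + yy G := by
  have h1 : F = MvPowerSeries.X 0 +
      MvPowerSeries.X 1 * (1 + MvPowerSeries.X 0 * G) := by rw [hG]; ring
  rw [h1, map_add, map_mul, emb_X0, emb_X1, yy]

lemma embedZW'_eq (A : MvPowerSeries (Fin 2) R) : embedZW' A = emb A := by
  apply PowerSeries.ext; intro j
  rw [embedZW', PowerSeries.coeff_mk, coeff_emb]
  rfl

lemma PP_mul_pow (a : ℤ) : ∀ m : ℕ, PP G a * (PP G 1) ^ m = PP G (a + m)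
  | 0 => by rw [pow_zero, mul_one, Nat.cast_zero, add_zero]
  | (m + 1) => by
      rw [pow_succ, ← mul_assoc, PP_mul_pow a m, PP_mul, Nat.cast_add,
        Nat.cast_one, add_assoc]

end Main

end FGLAux

open FGLAux in
/-- Let `F` be a formal group law over `R`, written
`F = z + w + zwG`, and let `i_{z,w}F(z,w)^{-n}` denote the expansion of
`F(z,w)^{-n}` in negative powers of `z`.  Then
`i_{z,w}F(z,w)^{-n} · F(z,w)^n = 1` for all `n ≥ 0`, as an identity in the
ring `R((z))⟦w⟧`. -/
theorem expansion_mul_pow_eq_one {R : Type*} [CommRing R]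
    (F G : MvPowerSeries (Fin 2) R) (hF : IsFormalGroupLaw F)
    (hG : F = MvPowerSeries.X 0 + MvPowerSeries.X 1 +
      MvPowerSeries.X 0 * MvPowerSeries.X 1 * G) (n : ℕ) :
    expandZW G (-(n : ℤ)) * (embedZW' F) ^ n = 1 := by
  rw [expandZW_eq_PP, embedZW'_eq, emb_F G hG, ← PP_one, PP_mul_pow]
  rw [show -(n:ℤ) + n = 0 by ring, PP_zero]
end

section
/- In the setting of the previous construction, Y(a,z)b = Φ_*(D(z)a ⊗ b) with Φ commutative and associative, D an F-shift algebra homomorphism fixing Ω, also satisfies the skew-symmetry axiom of a vertex F-algebra (without signs, in the ungraded case): Y(a,z)b = D(z)(Y(b,ι(z))a), where ι is the formal inverse of F. Proof sketch: D(z)Φ_*(D(ι(z))b ⊗ a) = Φ_*(D(F(z,ι(z)))b ⊗ D(z)a) = Φ_*(b ⊗ D(z)a) = Φ_*(D(z)a ⊗ b). -/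
/-!
A formal group law over a commutative ring `R` is a power series
`F(z,w) = Σ_{i,j≥0} F_{ij} z^i w^j ∈ R⟦z,w⟧` with `F(z,w) = F(w,z)`, `F(z,0) = z` and
`F(F(z,w),v) = F(z,F(w,v))`.  We formulate everything coefficientwise: the axioms
and the substitutions `F(z, ι(z))` are expressed through their (finite) coefficient sums.
-/

open Finset

section SkewAux

open Finset

variable {R : Type*} [CommRing R]

private lemma fin2_decomp (d : Fin 2 →₀ ℕ) :
    Finsupp.single 0 (d 0) + Finsupp.single 1 (d 1) = d := by
  ext x
  fin_cases x <;> simp [Finsupp.single_apply]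

private lemma fin2_apply0 (q k : ℕ) :
    ((Finsupp.single (0 : Fin 2) q + Finsupp.single 1 k) : Fin 2 →₀ ℕ) 0 = q := by
  simp [Finsupp.single_apply]

private lemma fin2_apply1 (q k : ℕ) :
    ((Finsupp.single (0 : Fin 2) q + Finsupp.single 1 k) : Fin 2 →₀ ℕ) 1 = k := by
  simp [Finsupp.single_apply]

private lemma iota_pow_coeff_zero {ι : PowerSeries R} (h0 : PowerSeries.constantCoeff ι = 0)
    {s k : ℕ} (h : s < k) : PowerSeries.coeff s (ι ^ k) = 0 := by
  have hdvd : (PowerSeries.X : PowerSeries R) ^ k ∣ ι ^ k :=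
    pow_dvd_pow_of_dvd (PowerSeries.X_dvd_iff.2 h0) k
  exact PowerSeries.X_pow_dvd_iff.1 hdvd s h

private lemma pow_coeff_zero_of_lt {F : MvPowerSeries (Fin 2) R}
    (h0 : MvPowerSeries.coeff 0 F = 0) :
    ∀ (n : ℕ) (d : Fin 2 →₀ ℕ), d 0 + d 1 < n → MvPowerSeries.coeff d (F ^ n) = 0 := by
  intro n
  induction n with
  | zero => intro d h; omega
  | succ n ih =>
    intro d h
    rw [pow_succ, MvPowerSeries.coeff_mul]
    apply Finset.sum_eq_zero
    rintro ⟨d1, d2⟩ hmem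
    have hsum : d1 + d2 = d := Finset.HasAntidiagonal.mem_antidiagonal.1 hmem
    have e0 : d1 0 + d2 0 = d 0 := by rw [← hsum]; simp
    have e1 : d1 1 + d2 1 = d 1 := by rw [← hsum]; simp
    by_cases h2 : d2 = 0
    · subst h2
      simp only [h0, mul_zero]
    · have hne : d2 0 + d2 1 ≠ 0 := by
        intro hc
        apply h2
        ext x
        fin_cases x <;> simp <;> omega
      have hd1 : d1 0 + d1 1 < n := by omega
      rw [ih d1 hd1, zero_mul]

/-- Substitution `z ↦ X`, `w ↦ ι` on polynomials, as an algebra homomorphism. -/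
noncomputable def Esub (ι : PowerSeries R) : MvPolynomial (Fin 2) R →ₐ[R] PowerSeries R :=
  MvPolynomial.aeval ![PowerSeries.X, ι]

private lemma coeff_Esub_monomial (ι : PowerSeries R) (d : Fin 2 →₀ ℕ) (r : R) (M : ℕ) :
    PowerSeries.coeff M (Esub ι (MvPolynomial.monomial d r))
      = if d 0 ≤ M then r * PowerSeries.coeff (M - d 0) (ι ^ d 1) else 0 := by
  rw [Esub, MvPolynomial.aeval_monomial, Finsupp.prod_pow]
  rw [Fin.prod_univ_two]
  simp only [Matrix.cons_val_zero, Matrix.cons_val_one, Matrix.head_cons]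
  rw [← PowerSeries.C_eq_algebraMap, ← PowerSeries.smul_eq_C_mul, map_smul,
    PowerSeries.coeff_X_pow_mul']
  simp [smul_eq_mul, mul_ite]

private lemma star_mono {ι : PowerSeries R} (h0 : PowerSeries.constantCoeff ι = 0)
    (d : Fin 2 →₀ ℕ) (r : R) (M : ℕ) :
    ∑ q ∈ range (M+1), ∑ k ∈ range (M+1),
      (if d = Finsupp.single 0 q + Finsupp.single 1 k then r else 0)
        * PowerSeries.coeff (M - q) (ι ^ k)
    = if d 0 ≤ M then r * PowerSeries.coeff (M - d 0) (ι ^ d 1) else 0 := by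
  have key : ∀ q k : ℕ, (d = Finsupp.single 0 q + Finsupp.single 1 k) ↔ (q = d 0 ∧ k = d 1) := by
    intro q k
    constructor
    · rintro rfl
      exact ⟨(fin2_apply0 q k).symm, (fin2_apply1 q k).symm⟩
    · rintro ⟨rfl, rfl⟩
      exact (fin2_decomp d).symm
  by_cases hd0 : d 0 ≤ M
  · rw [if_pos hd0]
    by_cases hd1 : d 1 ≤ M
    · rw [Finset.sum_eq_single_of_mem (d 0) (mem_range.2 (by omega))]
      · rw [Finset.sum_eq_single_of_mem (d 1) (mem_range.2 (by omega))]
        · rw [if_pos ((key _ _).2 ⟨rfl, rfl⟩)]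
        · intro k _ hk
          rw [if_neg, zero_mul]
          intro hc
          exact hk ((key _ _).1 hc).2
      · intro q _ hq
        apply Finset.sum_eq_zero
        intro k _
        rw [if_neg, zero_mul]
        intro hc
        exact hq ((key _ _).1 hc).1
    · have hz : r * PowerSeries.coeff (M - d 0) (ι ^ d 1) = 0 := by
        rw [iota_pow_coeff_zero h0 (by omega), mul_zero]
      rw [hz]
      apply Finset.sum_eq_zero; intro q _
      apply Finset.sum_eq_zero; intro k hk
      rw [if_neg, zero_mul]
      intro hc
      have := ((key _ _).1 hc).2
      rw [mem_range] at hk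
      omega
  · rw [if_neg hd0]
    apply Finset.sum_eq_zero; intro q hq
    apply Finset.sum_eq_zero; intro k _
    rw [if_neg, zero_mul]
    intro hc
    have := ((key _ _).1 hc).1
    rw [mem_range] at hq
    omega

private lemma coeff_Esub {ι : PowerSeries R} (h0 : PowerSeries.constantCoeff ι = 0)
    (P : MvPolynomial (Fin 2) R) (M : ℕ) :
    PowerSeries.coeff M (Esub ι P)
      = ∑ q ∈ range (M+1), ∑ k ∈ range (M+1),
          MvPolynomial.coeff (Finsupp.single 0 q + Finsupp.single 1 k) P
            * PowerSeries.coeff (M - q) (ι ^ k) := by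
  have hc : ∀ q k : ℕ,
      MvPolynomial.coeff (Finsupp.single 0 q + Finsupp.single 1 k) P
        = ∑ d ∈ P.support, (if d = Finsupp.single 0 q + Finsupp.single 1 k
            then MvPolynomial.coeff d P else 0) := by
    intro q k
    conv_lhs => rw [P.as_sum]
    rw [MvPolynomial.coeff_sum]
    apply Finset.sum_congr rfl
    intro d _
    rw [MvPolynomial.coeff_monomial]
  conv_lhs => rw [P.as_sum]
  rw [map_sum, map_sum]
  simp only [hc, Finset.sum_mul]
  trans (∑ d ∈ P.support, ∑ q ∈ range (M+1), ∑ k ∈ range (M+1),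
      (if d = Finsupp.single 0 q + Finsupp.single 1 k then MvPolynomial.coeff d P else 0)
        * PowerSeries.coeff (M - q) (ι ^ k))
  · refine Finset.sum_congr rfl fun d _ => ?_
    rw [coeff_Esub_monomial]
    exact (star_mono h0 d _ M).symm
  · rw [Finset.sum_comm]
    exact Finset.sum_congr rfl fun q _ => Finset.sum_comm

/-- Coefficient of `z^M` in `A(z, ι(z))`, as a finite sum. -/
noncomputable def CompS (ι : PowerSeries R) (A : MvPowerSeries (Fin 2) R) (M : ℕ) : R :=
  ∑ q ∈ range (M+1), ∑ k ∈ range (M+1),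
    MvPowerSeries.coeff (Finsupp.single 0 q + Finsupp.single 1 k) A
      * PowerSeries.coeff (M - q) (ι ^ k)

private noncomputable def bdS (M : ℕ) : Fin 2 →₀ ℕ :=
  Finsupp.single 0 (M+1) + Finsupp.single 1 (M+1)

private lemma coeff_trunc_bd {A : MvPowerSeries (Fin 2) R} {M : ℕ} {d : Fin 2 →₀ ℕ}
    (h0 : d 0 ≤ M) (h1 : d 1 ≤ M) :
    MvPolynomial.coeff d (MvPowerSeries.trunc R (bdS M) A) = MvPowerSeries.coeff d A := by
  have hbd : ∀ x : Fin 2, bdS M x = M + 1 := by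
    intro x
    fin_cases x
    · exact fin2_apply0 _ _
    · exact fin2_apply1 _ _
  have hd : ∀ x : Fin 2, d x ≤ M := by
    intro x
    fin_cases x
    · exact h0
    · exact h1
  rw [MvPowerSeries.coeff_trunc, if_pos]
  constructor
  · intro x
    rw [hbd]
    exact le_trans (hd x) (by omega)
  · intro hle
    have h00 := hle 0
    rw [hbd] at h00
    have := hd 0
    omega

private lemma coeff_Esub_trunc {ι : PowerSeries R} (h0 : PowerSeries.constantCoeff ι = 0)
    (A : MvPowerSeries (Fin 2) R) {M' M : ℕ} (h : M' ≤ M) :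
    PowerSeries.coeff M' (Esub ι (MvPowerSeries.trunc R (bdS M) A)) = CompS ι A M' := by
  rw [coeff_Esub h0, CompS]
  refine Finset.sum_congr rfl fun q hq => Finset.sum_congr rfl fun k hk => ?_
  rw [mem_range] at hq hk
  rw [coeff_trunc_bd]
  · rw [fin2_apply0]; omega
  · rw [fin2_apply1]; omega

private lemma CompS_mul {ι : PowerSeries R} (h0 : PowerSeries.constantCoeff ι = 0)
    (A B : MvPowerSeries (Fin 2) R) (M : ℕ) :
    CompS ι (A * B) M = ∑ u ∈ range (M+1), CompS ι A u * CompS ι B (M - u) := by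
  rw [← coeff_Esub_trunc h0 (A*B) (le_refl M)]
  have key : PowerSeries.coeff M (Esub ι (MvPowerSeries.trunc R (bdS M) (A*B)))
      = PowerSeries.coeff M (Esub ι
          (MvPowerSeries.trunc R (bdS M) A * MvPowerSeries.trunc R (bdS M) B)) := by
    rw [coeff_Esub h0, coeff_Esub h0]
    refine Finset.sum_congr rfl fun q hq => Finset.sum_congr rfl fun k hk => ?_
    rw [mem_range] at hq hk
    congr 1
    rw [coeff_trunc_bd (by rw [fin2_apply0]; omega) (by rw [fin2_apply1]; omega)]
    rw [MvPowerSeries.coeff_mul, MvPolynomial.coeff_mul]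
    refine Finset.sum_congr rfl fun x hx => ?_
    have hsum : x.1 + x.2 = _ := Finset.HasAntidiagonal.mem_antidiagonal.1 hx
    have e0 : x.1 0 + x.2 0 = q := by
      have := congrArg (fun f : Fin 2 →₀ ℕ => f 0) hsum
      simpa [fin2_apply0] using this
    have e1 : x.1 1 + x.2 1 = k := by
      have := congrArg (fun f : Fin 2 →₀ ℕ => f 1) hsum
      simpa [fin2_apply1] using this
    rw [coeff_trunc_bd (by omega) (by omega), coeff_trunc_bd (by omega) (by omega)]
  rw [key, map_mul, PowerSeries.coeff_mul, Finset.Nat.sum_antidiagonal_eq_sum_range_succ_mk]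
  refine Finset.sum_congr rfl fun u hu => ?_
  rw [mem_range] at hu
  rw [coeff_Esub_trunc h0 A (by omega), coeff_Esub_trunc h0 B (by omega)]

private lemma CompS_one (ι : PowerSeries R) (M : ℕ) :
    CompS ι (1 : MvPowerSeries (Fin 2) R) M = if M = 0 then 1 else 0 := by
  rw [CompS]
  rw [Finset.sum_eq_single_of_mem 0 (mem_range.2 (by omega))]
  · rw [Finset.sum_eq_single_of_mem 0 (mem_range.2 (by omega))]
    · rw [MvPowerSeries.coeff_one, if_pos (by simp), one_mul, pow_zero, Nat.sub_zero,
        PowerSeries.coeff_one]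
    · intro k _ hk
      rw [MvPowerSeries.coeff_one, if_neg, zero_mul]
      intro hc
      have := congrArg (fun f : Fin 2 →₀ ℕ => f 1) hc
      simp [fin2_apply1] at this
      exact hk this
  · intro q _ hq
    apply Finset.sum_eq_zero
    intro k _
    rw [MvPowerSeries.coeff_one, if_neg, zero_mul]
    intro hc
    have := congrArg (fun f : Fin 2 →₀ ℕ => f 0) hc
    simp [fin2_apply0] at this
    exact hq this

private lemma tri {M : Type*} [AddCommMonoid M] (g : ℕ → ℕ → M) (m : ℕ) :
    ∑ p ∈ range (m+1), ∑ q ∈ range (p+1), g q (p - q)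
      = ∑ r ∈ range (m+1), ∑ q ∈ range (m - r + 1), g q r := by
  rw [Finset.sum_sigma' (range (m+1)) (fun p => range (p+1)) (fun p q => g q (p - q)),
      Finset.sum_sigma' (range (m+1)) (fun r => range (m - r + 1)) (fun r q => g q r)]
  refine Finset.sum_nbij' (fun x => ⟨x.1 - x.2, x.2⟩) (fun x => ⟨x.2 + x.1, x.2⟩) ?_ ?_ ?_ ?_ ?_
  · rintro ⟨p, q⟩ hx
    simp only [mem_sigma, mem_range] at hx ⊢
    omega
  · rintro ⟨r, q⟩ hx
    simp only [mem_sigma, mem_range] at hx ⊢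
    omega
  · rintro ⟨p, q⟩ hx
    simp only [mem_sigma, mem_range] at hx
    simp only [Sigma.mk.inj_iff]
    exact ⟨by omega, HEq.rfl⟩
  · rintro ⟨r, q⟩ hx
    simp only [mem_sigma, mem_range] at hx
    simp only [Sigma.mk.inj_iff]
    exact ⟨by omega, HEq.rfl⟩
  · rintro ⟨p, q⟩ _
    rfl

end SkewAux


/-- Let `F` be a formal group law over `R` with formal inverse `ι`,
`V` a commutative `R`-algebra (commutative associative product `Φ_*` with unit
`Ω = 1`), and `D(z) = Σ_k D_k z^k` an `F`-shift operator on `V` which is an algebra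
homomorphism fixing `Ω`.  Then `Y(a,z)b = Φ_*(D(z)a ⊗ b)` satisfies the (ungraded,
signless) skew-symmetry axiom `Y(a,z)b = D(z)(Y(b,ι(z))a)`, stated coefficientwise at
`z^m`: the coefficient of `z^j` in `Y(b,ι(z))a = Σ_k D_k(b)·a · ι(z)^k` is the finite
sum `Σ_{k≤j} (ι^k)_j • (D_k b · a)` (finite since `ι` has zero constant term), and
applying `D(z)` gives the coefficient `Σ_{p+j=m} D_p(⋯)` at `z^m`. -/
theorem commutative_construction_skew_symmetry {R : Type*} [CommRing R]
    (F : MvPowerSeries (Fin 2) R) (hF : IsFormalGroupLaw F)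
    (ι : PowerSeries R) (hι : IsFormalInverse F ι)
    {V : Type*} [CommRing V] [Algebra R V]
    (D : ℕ → V →ₗ[R] V)
    (hD0 : ∀ v : V, D 0 v = v)
    (hDcomp : ∀ (i j : ℕ) (v : V), D i (D j v)
      = ∑ n ∈ range (i + j + 1),
          MvPowerSeries.coeff (Finsupp.single 0 i + Finsupp.single 1 j) (F ^ n) • D n v)
    (hDmul : ∀ (k : ℕ) (a b : V), D k (a * b) = ∑ p ∈ range (k + 1), D p a * D (k - p) b)
    (hD1 : ∀ k : ℕ, 0 < k → D k (1 : V) = 0) :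
    ∀ (m : ℕ) (a b : V),
      D m a * b
        = ∑ p ∈ range (m + 1),
            D p (∑ k ∈ range (m - p + 1),
              PowerSeries.coeff (m - p) (ι ^ k) • (D k b * a)) := by
  intro m a b
  have h0 : PowerSeries.constantCoeff ι = 0 := hι.1
  have hF00 : MvPowerSeries.coeff 0 F = 0 := by
    have h := hF.2.1 0
    rw [fgCoeff] at h
    simpa using h
  have hCompF : ∀ M : ℕ, CompS ι F M = 0 := by
    intro M
    have h := hι.2 M
    simpa [CompS, fgCoeff] using h
  have hcomp : ∀ n M : ℕ, CompS ι (F ^ n) M = if n = 0 ∧ M = 0 then 1 else 0 := by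
    intro n M
    cases n with
    | zero =>
      rw [pow_zero, CompS_one]
      simp
    | succ n =>
      rw [pow_succ, CompS_mul h0, Finset.sum_eq_zero, eq_comm, if_neg (by simp)]
      intro u _
      rw [hCompF, mul_zero]
  symm
  calc
    ∑ p ∈ range (m + 1), D p (∑ k ∈ range (m - p + 1),
        PowerSeries.coeff (m - p) (ι ^ k) • (D k b * a))
      = ∑ p ∈ range (m+1), ∑ k ∈ range (m-p+1), ∑ q ∈ range (p+1), ∑ n ∈ range (q+k+1),
          (MvPowerSeries.coeff (Finsupp.single 0 q + Finsupp.single 1 k) (F^n)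
            * PowerSeries.coeff (m - p) (ι ^ k)) • (D n b * D (p - q) a) := by
        refine Finset.sum_congr rfl fun p _ => ?_
        rw [map_sum]
        refine Finset.sum_congr rfl fun k _ => ?_
        rw [map_smul, hDmul, Finset.smul_sum]
        refine Finset.sum_congr rfl fun q _ => ?_
        rw [hDcomp, Finset.sum_mul, Finset.smul_sum]
        refine Finset.sum_congr rfl fun n _ => ?_
        rw [smul_mul_assoc, smul_smul, mul_comm (PowerSeries.coeff (m - p) (ι ^ k)) _]
    _ = ∑ p ∈ range (m+1), ∑ q ∈ range (p+1), ∑ k ∈ range (m-p+1), ∑ n ∈ range (q+k+1),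
          (MvPowerSeries.coeff (Finsupp.single 0 q + Finsupp.single 1 k) (F^n)
            * PowerSeries.coeff (m - p) (ι ^ k)) • (D n b * D (p - q) a) :=
        Finset.sum_congr rfl fun p _ => Finset.sum_comm
    _ = ∑ p ∈ range (m+1), ∑ q ∈ range (p+1),
          ∑ k ∈ range (m - q - (p - q) + 1), ∑ n ∈ range (q+k+1),
          (MvPowerSeries.coeff (Finsupp.single 0 q + Finsupp.single 1 k) (F^n)
            * PowerSeries.coeff (m - q - (p - q)) (ι ^ k)) • (D n b * D (p - q) a) := by
        refine Finset.sum_congr rfl fun p hp => Finset.sum_congr rfl fun q hq => ?_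
        rw [mem_range] at hp hq
        have e : m - q - (p - q) = m - p := by omega
        rw [e]
    _ = ∑ r ∈ range (m+1), ∑ q ∈ range (m - r + 1),
          ∑ k ∈ range (m - q - r + 1), ∑ n ∈ range (q+k+1),
          (MvPowerSeries.coeff (Finsupp.single 0 q + Finsupp.single 1 k) (F^n)
            * PowerSeries.coeff (m - q - r) (ι ^ k)) • (D n b * D r a) :=
        tri (fun q r => ∑ k ∈ range (m - q - r + 1), ∑ n ∈ range (q+k+1),
          (MvPowerSeries.coeff (Finsupp.single 0 q + Finsupp.single 1 k) (F^n)
            * PowerSeries.coeff (m - q - r) (ι ^ k)) • (D n b * D r a)) m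
    _ = ∑ r ∈ range (m+1), ∑ n ∈ range (2*(m-r)+1),
          CompS ι (F^n) (m-r) • (D n b * D r a) := by
        refine Finset.sum_congr rfl fun r _ => ?_
        have hqr : ∀ q : ℕ, m - q - r = m - r - q := fun q => by omega
        simp only [hqr]
        trans (∑ q ∈ range (m - r + 1), ∑ k ∈ range (m - r + 1), ∑ n ∈ range (2*(m-r)+1),
            (MvPowerSeries.coeff (Finsupp.single 0 q + Finsupp.single 1 k) (F^n)
              * PowerSeries.coeff (m - r - q) (ι ^ k)) • (D n b * D r a))
        · refine Finset.sum_congr rfl fun q hq => ?_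
          rw [mem_range] at hq
          trans (∑ k ∈ range (m - r + 1), ∑ n ∈ range (q+k+1),
              (MvPowerSeries.coeff (Finsupp.single 0 q + Finsupp.single 1 k) (F^n)
                * PowerSeries.coeff (m - r - q) (ι ^ k)) • (D n b * D r a))
          · refine Finset.sum_subset (Finset.range_subset_range.2 (by omega)) ?_
            intro k hk hk'
            rw [mem_range] at hk
            rw [mem_range, not_lt] at hk'
            apply Finset.sum_eq_zero
            intro n _
            rw [iota_pow_coeff_zero h0 (by omega), mul_zero, zero_smul]
          · refine Finset.sum_congr rfl fun k hk => ?_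
            rw [mem_range] at hk
            refine Finset.sum_subset (Finset.range_subset_range.2 (by omega)) ?_
            intro n _ hn
            rw [mem_range, not_lt] at hn
            rw [pow_coeff_zero_of_lt hF00 n _ (by rw [fin2_apply0, fin2_apply1]; omega),
              zero_mul, zero_smul]
        · trans (∑ q ∈ range (m - r + 1), ∑ n ∈ range (2*(m-r)+1), ∑ k ∈ range (m - r + 1),
              (MvPowerSeries.coeff (Finsupp.single 0 q + Finsupp.single 1 k) (F^n)
                * PowerSeries.coeff (m - r - q) (ι ^ k)) • (D n b * D r a))
          · exact Finset.sum_congr rfl fun q _ => Finset.sum_comm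
          rw [Finset.sum_comm]
          refine Finset.sum_congr rfl fun n _ => ?_
          rw [CompS, Finset.sum_smul]
          refine Finset.sum_congr rfl fun q _ => ?_
          rw [Finset.sum_smul]
    _ = b * D m a := by
        rw [Finset.sum_eq_single_of_mem m (self_mem_range_succ m)]
        · rw [Nat.sub_self]
          rw [show 2*0+1 = 1 from rfl, Finset.sum_range_one, hcomp 0 0, if_pos ⟨rfl, rfl⟩,
            one_smul, hD0]
        · intro r hr hrm
          rw [mem_range] at hr
          apply Finset.sum_eq_zero
          intro n _
          rw [hcomp, if_neg, zero_smul]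
          simp only [not_and]
          intro _
          omega
    _ = D m a * b := mul_comm _ _
end

section
/- Let F be a formal group law over R with formal inverse ι. Weak F-associativity for the commutative construction: for Y(a,z)b = Φ_*(D(z)a ⊗ b) with Φ commutative associative, unit Ω, and D an F-shift algebra homomorphism, we have the exact (N = 0) identity Y(Y(a,z)b, w)c = Y(a, F(z,w)) Y(b,w) c in V⟦z,w⟧. -/
/-!
A formal group law over a commutative ring `R` is a power series
`F(z,w) = Σ_{i,j≥0} F_{ij} z^i w^j ∈ R⟦z,w⟧` with `F(z,w) = F(w,z)`, `F(z,0) = z` and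
`F(F(z,w),v) = F(z,F(w,v))`.  We formulate everything coefficientwise: the axioms
and the substitutions `F(z, ι(z))` are expressed through their (finite) coefficient sums.
-/

open Finset

noncomputable def swapE : (Fin 2 →₀ ℕ) ≃+ (Fin 2 →₀ ℕ) :=
  Finsupp.domCongr (Equiv.swap 0 1)

lemma swapE_single (i j : ℕ) : swapE (Finsupp.single 0 i + Finsupp.single 1 j)
    = Finsupp.single 0 j + Finsupp.single 1 i := by
  rw [show swapE (Finsupp.single 0 i + Finsupp.single 1 j)
      = swapE (Finsupp.single 0 i) + swapE (Finsupp.single 1 j) from map_add _ _ _]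
  simp [swapE, Finsupp.equivMapDomain_single, Equiv.swap_apply_left, Equiv.swap_apply_right,
    add_comm]

lemma coeff_swap {R : Type*} [CommRing R] (f : MvPowerSeries (Fin 2) R)
    (hf : ∀ d, MvPowerSeries.coeff (swapE d) f = MvPowerSeries.coeff d f)
    (n : ℕ) (d : Fin 2 →₀ ℕ) :
    MvPowerSeries.coeff (swapE d) (f ^ n) = MvPowerSeries.coeff d (f ^ n) := by
  classical
  induction n generalizing d with
  | zero =>
      simp only [pow_zero]
      by_cases h : d = 0
      · simp [h]
      · have h' : swapE d ≠ 0 := fun hc => h (by simpa using congrArg swapE.symm hc)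
        rw [MvPowerSeries.coeff_one, MvPowerSeries.coeff_one, if_neg h, if_neg h']
  | succ n ih =>
      rw [pow_succ, MvPowerSeries.coeff_mul, MvPowerSeries.coeff_mul]
      refine Finset.sum_nbij' (fun p => (swapE.symm p.1, swapE.symm p.2))
        (fun p => (swapE p.1, swapE p.2)) ?_ ?_ ?_ ?_ ?_
      · intro p hp
        rw [Finset.HasAntidiagonal.mem_antidiagonal] at hp ⊢
        apply swapE.injective
        simp [hp]
      · intro p hp
        rw [Finset.HasAntidiagonal.mem_antidiagonal] at hp ⊢
        rw [← map_add, hp]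
      · intro p _; simp
      · intro p _; simp
      · intro p _
        have := ih (swapE.symm p.1)
        simp only [AddEquiv.apply_symm_apply] at this
        have h1 := hf (swapE.symm p.2)
        simp only [AddEquiv.apply_symm_apply] at h1
        rw [this, h1]

/-- Let `F` be a formal group law over `R`, `V` a commutative
`R`-algebra (commutative associative product with unit `Ω = 1`), and
`D(z) = Σ_k D_k z^k` an `F`-shift operator on `V` which is an algebra homomorphism.
For `Y(a,z)b = Φ_*(D(z)a ⊗ b)` the exact (`N = 0`) weak `F`-associativity identity
`Y(Y(a,z)b, w)c = Y(a, F(z,w)) Y(b,w) c` holds in `V⟦z,w⟧`: comparing coefficients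
of `z^i w^j`, the left side is `D_j(D_i(a)·b)·c` and the right side is the finite sum
`Σ_{j'≤j} Σ_{n ≤ i+(j-j')} (F^n)_{i,j-j'} • (D_n a · (D_{j'} b · c))`. -/
theorem commutative_construction_associativity {R : Type*} [CommRing R]
    (F : MvPowerSeries (Fin 2) R) (hF : IsFormalGroupLaw F)
    {V : Type*} [CommRing V] [Algebra R V]
    (D : ℕ → V →ₗ[R] V)
    (hD0 : ∀ v : V, D 0 v = v)
    (hDcomp : ∀ (i j : ℕ) (v : V), D i (D j v)
      = ∑ n ∈ range (i + j + 1),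
          MvPowerSeries.coeff (Finsupp.single 0 i + Finsupp.single 1 j) (F ^ n) • D n v)
    (hDmul : ∀ (k : ℕ) (a b : V), D k (a * b) = ∑ p ∈ range (k + 1), D p a * D (k - p) b)
    (hD1 : ∀ k : ℕ, 0 < k → D k (1 : V) = 0) :
    ∀ (i j : ℕ) (a b c : V),
      D j (D i a * b) * c
        = ∑ j' ∈ range (j + 1), ∑ n ∈ range (i + (j - j') + 1),
            MvPowerSeries.coeff (Finsupp.single 0 i + Finsupp.single 1 (j - j')) (F ^ n) •
              (D n a * (D j' b * c)) := by

  classical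
  -- symmetry of coefficients of F^n from commutativity of F
  have hFsym : ∀ d, MvPowerSeries.coeff (swapE d) F = MvPowerSeries.coeff d F := by
    intro d
    have hd : d = Finsupp.single 0 (d 0) + Finsupp.single 1 (d 1) := by
      ext x; fin_cases x <;> simp
    rw [hd, swapE_single]
    exact (hF.1 (d 0) (d 1)).symm
  have hsym : ∀ (n i j : ℕ),
      MvPowerSeries.coeff (Finsupp.single 0 j + Finsupp.single 1 i) (F ^ n)
        = MvPowerSeries.coeff (Finsupp.single 0 i + Finsupp.single 1 j) (F ^ n) := by
    intro n i j
    rw [← swapE_single i j]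
    exact coeff_swap F hFsym n _
  intro i j a b c
  rw [hDmul, Finset.sum_mul, ← Finset.sum_range_reflect]
  refine Finset.sum_congr rfl fun p hp => ?_
  have hp' : p ≤ j := Nat.lt_succ_iff.mp (Finset.mem_range.mp hp)
  have h1 : j + 1 - 1 - p = j - p := by omega
  have h2 : j - (j - p) = p := by omega
  rw [h1, h2, hDcomp (j - p) i a, Finset.sum_mul, Finset.sum_mul,
    show j - p + i + 1 = i + (j - p) + 1 by omega]
  refine Finset.sum_congr rfl fun n hn => ?_
  rw [smul_mul_assoc, smul_mul_assoc, mul_assoc, hsym n i (j - p)]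
end
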